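/- Let n be a natural number and let 𝔞 = [a_ij] be an n×n integer matrix. For 1 ≤ i ≤ n set a_i = (x_1²)^{a_i1} ⋯ (x_n²)^{a_in} ∈ A_n. Then there exists a unique group endomorphism t_𝔞 of G_n such that t_𝔞(x_i) = x_i a_i for all 1 ≤ i ≤ n. -/

import Mathlib

/-- The defining relations of the combinatorial Hantzsche-Wendt group `G_n`:
`x_i⁻¹ x_j² x_i = x_j⁻²` for all `i ≠ j`, written as relators. -/
def HWrels (n : ℕ) : Set (FreeGroup (Fin n)) :=
  {r | ∃ i j : Fin n, i ≠ j ∧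
    r = (FreeGroup.of i)⁻¹ * FreeGroup.of j ^ 2 * FreeGroup.of i * FreeGroup.of j ^ 2}

/-- The combinatorial Hantzsche-Wendt group `G_n`. -/
abbrev HW (n : ℕ) : Type := PresentedGroup (HWrels n)

/-- The generators `x_1, …, x_n` of `G_n`. -/
def x (n : ℕ) (i : Fin n) : HW n := PresentedGroup.of i

/-- For an `n × n` integer matrix `𝔞 = [a_ij]`, the element
`a_i = (x_1²)^{a_i1} ⋯ (x_n²)^{a_in}` of `A_n ≤ G_n`. -/
def aElt (n : ℕ) (𝔞 : Matrix (Fin n) (Fin n) ℤ) (i : Fin n) : HW n :=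
  ((List.finRange n).map fun j => (x n j ^ 2) ^ 𝔞 i j).prod

namespace HWaux

variable {n : ℕ}

/-- The defining relation holds in `HW n`. -/
lemma x_rel {i j : Fin n} (h : i ≠ j) :
    (x n i)⁻¹ * (x n j) ^ 2 * (x n i) * (x n j) ^ 2 = 1 := by
  have hmem : ((FreeGroup.of i)⁻¹ * FreeGroup.of j ^ 2 * FreeGroup.of i * FreeGroup.of j ^ 2 :
      FreeGroup (Fin n)) ∈ Subgroup.normalClosure (HWrels n) :=
    Subgroup.subset_normalClosure ⟨i, j, h, rfl⟩
  have h1 := (QuotientGroup.eq_one_iff _).mpr hmem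
  calc (x n i)⁻¹ * (x n j) ^ 2 * (x n i) * (x n j) ^ 2
      = PresentedGroup.mk (HWrels n)
        ((FreeGroup.of i)⁻¹ * FreeGroup.of j ^ 2 * FreeGroup.of i * FreeGroup.of j ^ 2) := by
        simp [x, PresentedGroup.of]
    _ = 1 := h1

/-- The conjugation relation: `x_i⁻¹ x_j² x_i = x_j⁻²` for `i ≠ j`. -/
lemma conj_sq {i j : Fin n} (h : i ≠ j) :
    (x n i)⁻¹ * (x n j) ^ 2 * (x n i) = ((x n j) ^ 2)⁻¹ :=
  mul_eq_one_iff_eq_inv.mp (x_rel h)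

/-- Squares of generators commute. -/
lemma comm_sq (j k : Fin n) : Commute ((x n j) ^ 2) ((x n k) ^ 2) := by
  rcases eq_or_ne j k with rfl | h
  · exact Commute.refl _
  · set y := (x n j) ^ 2 with hy
    set z := x n k with hz
    have h1 : z⁻¹ * y * z = y⁻¹ := conj_sq (Ne.symm h)
    have h2 : y * z = z * y⁻¹ := by
      rw [← h1]
      simp only [mul_assoc]
      rw [mul_inv_cancel_left]
    have h1' : z⁻¹ * (y⁻¹ * z) = y := by
      have := congrArg (·⁻¹) h1
      simpa [mul_assoc] using this
    have h3 : y⁻¹ * z = z * y := by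
      conv_rhs => rw [← h1']
      rw [mul_inv_cancel_left]
    show y * (x n k) ^ 2 = (x n k) ^ 2 * y
    rw [sq (x n k), ← hz]
    calc y * (z * z) = (y * z) * z := (mul_assoc _ _ _).symm
      _ = z * (y⁻¹ * z) := by rw [h2, mul_assoc]
      _ = z * (z * y) := by rw [h3]
      _ = z * z * y := (mul_assoc _ _ _).symm

lemma comm_sq_zpow (j k : Fin n) (a b : ℤ) :
    Commute (((x n j) ^ 2) ^ a) (((x n k) ^ 2) ^ b) :=
  (comm_sq j k).zpow_zpow a b

/-- Product of a list of powers of squares, with exponents `c`. -/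
def prodPow (n : ℕ) (c : Fin n → ℤ) : HW n :=
  ((List.finRange n).map fun j => ((x n j) ^ 2) ^ c j).prod

lemma aElt_eq (𝔞 : Matrix (Fin n) (Fin n) ℤ) (i : Fin n) :
    aElt n 𝔞 i = prodPow n (𝔞 i) := rfl

lemma commute_zpow_prodPow (j : Fin n) (m : ℤ) (c : Fin n → ℤ) :
    Commute (((x n j) ^ 2) ^ m) (prodPow n c) := by
  apply Commute.list_prod_right
  intro y hy
  simp only [List.mem_map] at hy
  obtain ⟨k, -, rfl⟩ := hy
  exact comm_sq_zpow j m (c k) (k := k)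

lemma prod_map_mul (c d : Fin n → ℤ) :
    ∀ l : List (Fin n),
      (l.map fun j => ((x n j) ^ 2) ^ c j).prod * (l.map fun j => ((x n j) ^ 2) ^ d j).prod
        = (l.map fun j => ((x n j) ^ 2) ^ (c j + d j)).prod := by
  intro l
  induction l with
  | nil => simp
  | cons a t ih =>
    simp only [List.map_cons, List.prod_cons]
    have hcomm : Commute (((x n a) ^ 2) ^ d a) ((t.map fun j => ((x n j) ^ 2) ^ c j).prod) := by
      apply Commute.list_prod_right
      intro y hy
      simp only [List.mem_map] at hy
      obtain ⟨k, -, rfl⟩ := hy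
      exact comm_sq_zpow a k (d a) (c k)
    calc ((x n a) ^ 2) ^ c a * (t.map fun j => ((x n j) ^ 2) ^ c j).prod *
          (((x n a) ^ 2) ^ d a * (t.map fun j => ((x n j) ^ 2) ^ d j).prod)
        = ((x n a) ^ 2) ^ c a * (((x n a) ^ 2) ^ d a *
            (t.map fun j => ((x n j) ^ 2) ^ c j).prod) *
            (t.map fun j => ((x n j) ^ 2) ^ d j).prod := by
          rw [hcomm.eq]
          simp only [mul_assoc]
      _ = ((x n a) ^ 2) ^ c a * ((x n a) ^ 2) ^ d a *
            ((t.map fun j => ((x n j) ^ 2) ^ c j).prod *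
            (t.map fun j => ((x n j) ^ 2) ^ d j).prod) := by
          simp only [mul_assoc]
      _ = ((x n a) ^ 2) ^ (c a + d a) * (t.map fun j => ((x n j) ^ 2) ^ (c j + d j)).prod := by
          rw [← zpow_add, ih]

lemma prodPow_mul (c d : Fin n → ℤ) :
    prodPow n c * prodPow n d = prodPow n (c + d) :=
  prod_map_mul c d (List.finRange n)

/-- A product with all exponents zero except at `i` is a single power. -/
lemma prodPow_single (i : Fin n) (c : Fin n → ℤ) (hc : ∀ j, j ≠ i → c j = 0) :
    prodPow n c = ((x n i) ^ 2) ^ c i := by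
  have key : ∀ l : List (Fin n),
      (l.map fun j => ((x n j) ^ 2) ^ c j).prod = (((x n i) ^ 2) ^ c i) ^ l.count i := by
    intro l
    induction l with
    | nil => simp
    | cons a t ih =>
      simp only [List.map_cons, List.prod_cons, ih]
      rcases eq_or_ne a i with rfl | h
      · rw [List.count_cons_self]
        exact (pow_succ' _ _).symm
      · rw [hc a h, zpow_zero, one_mul, List.count_cons_of_ne h]
  have hcount : (List.finRange n).count i = 1 :=
    List.count_eq_one_of_mem (List.nodup_finRange n) (List.mem_finRange i)
  rw [prodPow, key, hcount, pow_one]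

/-- Conjugation by `x_i` of a single square power. -/
lemma conj_sq_zpow {i j : Fin n} (m : ℤ) :
    (x n i)⁻¹ * ((x n j) ^ 2) ^ m * x n i
      = ((x n j) ^ 2) ^ (if j = i then m else -m) := by
  have base : (x n i)⁻¹ * (x n j) ^ 2 * x n i
      = ((x n j) ^ 2) ^ (if j = i then (1 : ℤ) else -1) := by
    rcases eq_or_ne j i with rfl | h
    · rw [if_pos rfl, zpow_one]
      group
    · rw [if_neg h, conj_sq (Ne.symm h), zpow_neg, zpow_one]
  calc (x n i)⁻¹ * ((x n j) ^ 2) ^ m * x n i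
      = (MulAut.conj (x n i)⁻¹) (((x n j) ^ 2) ^ m) := by
        simp [MulAut.conj_apply, mul_assoc]
    _ = ((MulAut.conj (x n i)⁻¹) ((x n j) ^ 2)) ^ m := map_zpow _ _ _
    _ = ((x n i)⁻¹ * (x n j) ^ 2 * x n i) ^ m := by
        simp [MulAut.conj_apply, mul_assoc]
    _ = (((x n j) ^ 2) ^ (if j = i then (1 : ℤ) else -1)) ^ m := by rw [base]
    _ = ((x n j) ^ 2) ^ (if j = i then m else -m) := by
        rw [← zpow_mul]
        rcases eq_or_ne j i with rfl | h <;> simp [*]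

/-- Conjugation by `x_i` of a `prodPow`. -/
lemma conj_prodPow (i : Fin n) (c : Fin n → ℤ) :
    (x n i)⁻¹ * prodPow n c * x n i
      = prodPow n (fun j => if j = i then c j else -c j) := by
  simp only [prodPow]
  have h0 : (x n i)⁻¹ * ((List.finRange n).map fun j => ((x n j) ^ 2) ^ c j).prod * x n i
      = (MulAut.conj (x n i)⁻¹) (((List.finRange n).map fun j => ((x n j) ^ 2) ^ c j).prod) := by
    simp [MulAut.conj_apply, mul_assoc]
  rw [h0, ← MulEquiv.coe_toMonoidHom, map_list_prod, List.map_map]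
  refine congrArg List.prod (List.map_congr_left fun j _ => ?_)
  simp only [Function.comp_apply, MulEquiv.coe_toMonoidHom, MulEquiv.toMonoidHom_eq_coe,
    MonoidHom.coe_coe]
  rw [← conj_sq_zpow (i := i) (j := j) (c j)]
  simp [MulAut.conj_apply, mul_assoc]

/-- `(x_i a_i)² = (x_i²)^(1 + 2 a_ii)`. -/
lemma sq_key (𝔞 : Matrix (Fin n) (Fin n) ℤ) (i : Fin n) :
    (x n i * aElt n 𝔞 i) ^ 2 = ((x n i) ^ 2) ^ (1 + 2 * 𝔞 i i) := by
  have expand : (x n i * aElt n 𝔞 i) ^ 2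
      = (x n i) ^ 2 * (((x n i)⁻¹ * aElt n 𝔞 i * x n i) * aElt n 𝔞 i) := by
    rw [sq, sq]
    simp [mul_assoc]
  rw [expand, aElt_eq, conj_prodPow, prodPow_mul]
  have h1 : prodPow n ((fun j => if j = i then 𝔞 i j else -𝔞 i j) + 𝔞 i)
      = ((x n i) ^ 2) ^ (2 * 𝔞 i i) := by
    rw [prodPow_single i]
    · simp [two_mul]
    · intro j hj
      simp [if_neg hj]
  rw [h1, ← zpow_one_add]

/-- `aElt` commutes with squares of generators (to integer powers). -/
lemma commute_aElt (𝔞 : Matrix (Fin n) (Fin n) ℤ) (i j : Fin n) (m : ℤ) :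
    Commute (((x n j) ^ 2) ^ m) (aElt n 𝔞 i) := by
  rw [aElt_eq]
  exact commute_zpow_prodPow j m (𝔞 i)

end HWaux

open HWaux in
/-- Lemma (Statement 1): there is a unique endomorphism `t_𝔞` of `G_n` with
`t_𝔞(x_i) = x_i a_i` for all `i`. -/
theorem stmt1 (n : ℕ) (𝔞 : Matrix (Fin n) (Fin n) ℤ) :
    ∃! t : HW n →* HW n, ∀ i : Fin n, t (x n i) = x n i * aElt n 𝔞 i := by
  set f : Fin n → HW n := fun i => x n i * aElt n 𝔞 i with hf
  have hrels : ∀ r ∈ HWrels n, FreeGroup.lift f r = 1 := by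
    rintro r ⟨i, j, hij, rfl⟩
    simp only [map_mul, map_inv, map_pow, FreeGroup.lift_apply_of, hf]
    set m : ℤ := 1 + 2 * 𝔞 j j with hm
    have hsq : (x n j * aElt n 𝔞 j) ^ 2 = ((x n j) ^ 2) ^ m := sq_key 𝔞 j
    rw [hsq]
    set X := x n i
    set A := aElt n 𝔞 i with hA
    set Y := ((x n j) ^ 2) ^ m with hY
    set Z := ((x n j) ^ 2) ^ (-m) with hZ
    have hconj : X⁻¹ * Y * X = Z := by
      rw [hY, hZ, conj_sq_zpow, if_neg (Ne.symm hij)]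
    have hcomm' : Z * A = A * Z := (commute_aElt 𝔞 i j (-m)).eq
    have e1 : (X * A)⁻¹ * Y * (X * A) = A⁻¹ * (X⁻¹ * Y * X) * A := by
      rw [mul_inv_rev]
      simp only [mul_assoc]
    have e2 : A⁻¹ * Z * A = Z := by
      rw [mul_assoc, hcomm', inv_mul_cancel_left]
    rw [e1, hconj, e2, hZ, hY, ← zpow_add]
    simp
  refine ⟨PresentedGroup.toGroup hrels, fun i => PresentedGroup.toGroup.of hrels, ?_⟩
  intro t ht
  ext i
  show t (x n i) = PresentedGroup.toGroup hrels (x n i)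
  rw [ht i]
  exact (PresentedGroup.toGroup.of hrels).symm
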